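/- Let G1, G2 ∈ ℝ^{n×n} be symmetric positive definite matrices such that G1 − G2 is symmetric positive definite, let G ∈ ℝ^{m×m} be symmetric positive semidefinite, and let B ∈ ℝ^{n×m} have full column rank. Define R1 = chol(G + BᵀG1B), R2 = chol(G + BᵀG2B), R3 = chol(G + BᵀG1⁻¹B), R4 = chol(G + BᵀG2⁻¹B), R̂1 = chol((G + BᵀG1B)⁻¹), R̂2 = chol((G + BᵀG2B)⁻¹), R̂3 = chol((G + BᵀG1⁻¹B)⁻¹), R̂4 = chol((G + BᵀG2⁻¹B)⁻¹). Then for every i = 1, …, m: λ_i(R1) > λ_i(R2), λ_i(R̂1) < λ_i(R̂2), λ_i(R3) < λ_i(R4), and λ_i(R̂3) > λ_i(R̂4). -/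

import Mathlib

open Matrix

noncomputable section

/-- Euclidean norm of a real vector. -/
def euclNorm {m : ℕ} (x : Fin m → ℝ) : ℝ := Real.sqrt (∑ k, x k ^ 2)

/-- The lattice vector `A z` for an integer vector `z`. -/
def latticeVec {m n : ℕ} (A : Matrix (Fin m) (Fin n) ℝ) (z : Fin n → ℤ) : Fin m → ℝ :=
  A.mulVec fun k => (z k : ℝ)

/-- The `i`-th successive minimum of the lattice generated by `A`: the smallest `r ≥ 0` such
that the closed ball of radius `r` centered at the origin contains `i` linearly independent
lattice vectors. -/
def succMin {m n : ℕ} (A : Matrix (Fin m) (Fin n) ℝ) (i : ℕ) : ℝ :=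
  sInf {r : ℝ | 0 ≤ r ∧ ∃ v : Fin i → (Fin n → ℤ),
    LinearIndependent ℝ (fun j => latticeVec A (v j)) ∧
    ∀ j, euclNorm (latticeVec A (v j)) ≤ r}

/-- `R` is the Cholesky factor of `G`: `R` is upper triangular with positive diagonal
entries and `Rᵀ * R = G`. -/
def IsCholesky {n : ℕ} (G R : Matrix (Fin n) (Fin n) ℝ) : Prop :=
  R.BlockTriangular id ∧ (∀ j, 0 < R j j) ∧ Rᵀ * R = G

namespace Aux7

/-- The real quadratic form of a matrix. -/
def qf {m : ℕ} (A : Matrix (Fin m) (Fin m) ℝ) (x : Fin m → ℝ) : ℝ := x ⬝ᵥ A *ᵥ x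

lemma qf_cont {m : ℕ} (A : Matrix (Fin m) (Fin m) ℝ) : Continuous (qf A) := by
  unfold qf dotProduct mulVec
  exact continuous_finset_sum _ fun i _ =>
    (continuous_apply i).mul (continuous_finset_sum _ fun j _ =>
      continuous_const.mul (continuous_apply j))

lemma qf_smul {m : ℕ} (A : Matrix (Fin m) (Fin m) ℝ) (t : ℝ) (x : Fin m → ℝ) :
    qf A (t • x) = t ^ 2 * qf A x := by
  unfold qf
  rw [mulVec_smul, smul_dotProduct, dotProduct_smul]
  simp [smul_eq_mul]; ring

lemma qf_pos {m : ℕ} {A : Matrix (Fin m) (Fin m) ℝ} (hA : A.PosDef) {x : Fin m → ℝ}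
    (hx : x ≠ 0) : 0 < qf A x := by
  have := hA.dotProduct_mulVec_pos hx
  simpa [qf, star_trivial] using this

lemma sphere_nonempty' {m : ℕ} (hm : 0 < m) :
    (Metric.sphere (0 : Fin m → ℝ) 1).Nonempty := by
  haveI : Nonempty (Fin m) := ⟨⟨0, hm⟩⟩
  exact NormedSpace.sphere_nonempty.2 zero_le_one

lemma quad_lower {m : ℕ} (hm : 0 < m) {A : Matrix (Fin m) (Fin m) ℝ} (hA : A.PosDef) :
    ∃ ε > 0, ∀ z : Fin m → ℝ, ε * ‖z‖ ^ 2 ≤ qf A z := by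
  obtain ⟨u, hu, hmin⟩ := (isCompact_sphere (0 : Fin m → ℝ) 1).exists_isMinOn
    (sphere_nonempty' hm) (qf_cont A).continuousOn
  have hu1 : ‖u‖ = 1 := by simpa using mem_sphere_zero_iff_norm.1 hu
  have hune : u ≠ 0 := by intro h; rw [h] at hu1; simp at hu1
  refine ⟨qf A u, qf_pos hA hune, fun z => ?_⟩
  rcases eq_or_ne z 0 with rfl | hz
  · simp [qf]
  · have hnz : (0:ℝ) < ‖z‖ := norm_pos_iff.2 hz
    have hsz : ‖(‖z‖⁻¹ • z)‖ = 1 := by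
      rw [norm_smul, norm_inv, norm_norm, inv_mul_cancel₀ hnz.ne']
    have h1 : qf A u ≤ qf A (‖z‖⁻¹ • z) :=
      hmin (mem_sphere_zero_iff_norm.2 hsz)
    rw [qf_smul] at h1
    have h2 : qf A u * ‖z‖ ^ 2 ≤ ‖z‖⁻¹ ^ 2 * qf A z * ‖z‖ ^ 2 := by
      nlinarith
    calc qf A u * ‖z‖ ^ 2 ≤ ‖z‖⁻¹ ^ 2 * qf A z * ‖z‖ ^ 2 := h2
      _ = qf A z := by field_simp

lemma quad_upper {m : ℕ} (hm : 0 < m) (A : Matrix (Fin m) (Fin m) ℝ) :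
    ∃ M > 0, ∀ z : Fin m → ℝ, qf A z ≤ M * ‖z‖ ^ 2 := by
  obtain ⟨u, hu, hmax⟩ := (isCompact_sphere (0 : Fin m → ℝ) 1).exists_isMaxOn
    (sphere_nonempty' hm) (qf_cont A).continuousOn
  refine ⟨max (qf A u) 1, lt_of_lt_of_le one_pos (le_max_right _ _), fun z => ?_⟩
  rcases eq_or_ne z 0 with rfl | hz
  · simp [qf]
  · have hnz : (0:ℝ) < ‖z‖ := norm_pos_iff.2 hz
    have hsz : ‖(‖z‖⁻¹ • z)‖ = 1 := by
      rw [norm_smul, norm_inv, norm_norm, inv_mul_cancel₀ hnz.ne']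
    have h1 : qf A (‖z‖⁻¹ • z) ≤ max (qf A u) 1 :=
      le_trans (hmax (mem_sphere_zero_iff_norm.2 hsz)) (le_max_left _ _)
    rw [qf_smul] at h1
    have h2 : ‖z‖⁻¹ ^ 2 * qf A z * ‖z‖ ^ 2 ≤ max (qf A u) 1 * ‖z‖ ^ 2 := by
      nlinarith
    calc qf A z = ‖z‖⁻¹ ^ 2 * qf A z * ‖z‖ ^ 2 := by field_simp
      _ ≤ max (qf A u) 1 * ‖z‖ ^ 2 := h2

lemma qf_sub {m : ℕ} (A A' : Matrix (Fin m) (Fin m) ℝ) (z : Fin m → ℝ) :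
    qf (A - A') z = qf A z - qf A' z := by
  unfold qf
  rw [sub_mulVec, dotProduct_sub]

lemma exists_ratio {m : ℕ} (hm : 0 < m) {A A' : Matrix (Fin m) (Fin m) ℝ}
    (hA' : A'.PosDef) (hD : (A - A').PosDef) :
    ∃ c > 1, ∀ z : Fin m → ℝ, c ^ 2 * qf A' z ≤ qf A z := by
  obtain ⟨ε, hε, hlow⟩ := quad_lower hm hD
  obtain ⟨M, hM, hup⟩ := quad_upper hm A'
  refine ⟨Real.sqrt (1 + ε / M), ?_, fun z => ?_⟩
  · have : (1:ℝ) < 1 + ε / M := by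
      have : 0 < ε / M := div_pos hε hM
      linarith
    calc (1:ℝ) = Real.sqrt 1 := Real.sqrt_one.symm
      _ < Real.sqrt (1 + ε / M) := Real.sqrt_lt_sqrt zero_le_one this
  · rw [Real.sq_sqrt (by positivity)]
    have h1 : ε * ‖z‖ ^ 2 ≤ qf A z - qf A' z := by
      have := hlow z; rwa [qf_sub] at this
    have h2 : qf A' z ≤ M * ‖z‖ ^ 2 := hup z
    have h3 : ε / M * qf A' z ≤ ε / M * (M * ‖z‖ ^ 2) := by
      apply mul_le_mul_of_nonneg_left h2 (by positivity)
    have h4 : ε / M * (M * ‖z‖ ^ 2) = ε * ‖z‖ ^ 2 := by field_simp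
    nlinarith

lemma rank_inj {n m : ℕ} {B : Matrix (Fin n) (Fin m) ℝ} (hB : B.rank = m) :
    Function.Injective B.mulVec := by
  have h := B.mulVecLin.finrank_range_add_finrank_ker
  rw [Matrix.rank] at hB
  rw [hB] at h
  simp only [Module.finrank_pi, Fintype.card_fin] at h
  have hker : Module.finrank ℝ (LinearMap.ker B.mulVecLin) = 0 := by omega
  have : LinearMap.ker B.mulVecLin = ⊥ := Submodule.finrank_eq_zero.mp hker
  exact LinearMap.ker_eq_bot.mp this

lemma dot_sym {k : ℕ} {B : Matrix (Fin k) (Fin k) ℝ} (hB : B.IsHermitian)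
    (u v : Fin k → ℝ) : u ⬝ᵥ B *ᵥ v = v ⬝ᵥ B *ᵥ u := by
  have hBt : Bᵀ = B := by
    rw [← Matrix.conjTranspose_eq_transpose_of_trivial]; exact hB
  calc u ⬝ᵥ B *ᵥ v = (u ᵥ* B) ⬝ᵥ v := Matrix.dotProduct_mulVec u B v
    _ = (Bᵀ *ᵥ u) ⬝ᵥ v := by rw [Matrix.mulVec_transpose]
    _ = (B *ᵥ u) ⬝ᵥ v := by rw [hBt]
    _ = v ⬝ᵥ B *ᵥ u := dotProduct_comm _ _

lemma dot_transfer {n m : ℕ} (B : Matrix (Fin n) (Fin m) ℝ) (D : Matrix (Fin n) (Fin n) ℝ)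
    (x : Fin m → ℝ) : x ⬝ᵥ (Bᵀ * D * B) *ᵥ x = (B *ᵥ x) ⬝ᵥ D *ᵥ (B *ᵥ x) := by
  rw [Matrix.mul_assoc, ← Matrix.mulVec_mulVec, ← Matrix.mulVec_mulVec]
  calc x ⬝ᵥ Bᵀ *ᵥ (D *ᵥ (B *ᵥ x)) = x ⬝ᵥ ((D *ᵥ (B *ᵥ x)) ᵥ* B) := by
        rw [Matrix.mulVec_transpose]
    _ = ((D *ᵥ (B *ᵥ x)) ᵥ* B) ⬝ᵥ x := dotProduct_comm _ _
    _ = (D *ᵥ (B *ᵥ x)) ⬝ᵥ (B *ᵥ x) := (Matrix.dotProduct_mulVec _ B x).symm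
    _ = (B *ᵥ x) ⬝ᵥ D *ᵥ (B *ᵥ x) := dotProduct_comm _ _

lemma conj_posDef {n m : ℕ} {D : Matrix (Fin n) (Fin n) ℝ} (hD : D.PosDef)
    {B : Matrix (Fin n) (Fin m) ℝ} (hB : Function.Injective B.mulVec) :
    (Bᵀ * D * B).PosDef := by
  refine Matrix.PosDef.of_dotProduct_mulVec_pos ?_ ?_
  · have hDt : Dᵀ = D := by
      rw [← Matrix.conjTranspose_eq_transpose_of_trivial]; exact hD.1
    show (Bᵀ * D * B)ᴴ = _
    rw [Matrix.conjTranspose_eq_transpose_of_trivial]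
    rw [Matrix.transpose_mul, Matrix.transpose_mul, Matrix.transpose_transpose, hDt,
      Matrix.mul_assoc]
  · intro x hx
    have hBx : B *ᵥ x ≠ 0 := by
      intro h
      exact hx (hB (by rw [h, Matrix.mulVec_zero]))
    have := hD.dotProduct_mulVec_pos hBx
    simpa [star_trivial, dot_transfer] using this

lemma inv_sub_inv_posDef {k : ℕ} {A B : Matrix (Fin k) (Fin k) ℝ}
    (hA : A.PosDef) (hB : B.PosDef) (hD : (A - B).PosDef) : (B⁻¹ - A⁻¹).PosDef := by
  have hAdet : A.det ≠ 0 := ne_of_gt hA.det_pos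
  have hBdet : B.det ≠ 0 := ne_of_gt hB.det_pos
  refine Matrix.PosDef.of_dotProduct_mulVec_pos ?_ ?_
  · exact hB.inv.1.sub hA.inv.1
  · intro x hx
    set y := A⁻¹ *ᵥ x with hy
    have hAy : A *ᵥ y = x := by
      rw [hy, Matrix.mulVec_mulVec, Matrix.mul_nonsing_inv _ (isUnit_iff_ne_zero.mpr hAdet),
        Matrix.one_mulVec]
    have hyne : y ≠ 0 := by
      intro h; apply hx; rw [← hAy, h, Matrix.mulVec_zero]
    set w := y - B⁻¹ *ᵥ x with hw
    have hBw : B *ᵥ (B⁻¹ *ᵥ x) = x := by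
      rw [Matrix.mulVec_mulVec, Matrix.mul_nonsing_inv _ (isUnit_iff_ne_zero.mpr hBdet),
        Matrix.one_mulVec]
    have hexp : w ⬝ᵥ B *ᵥ w
        = y ⬝ᵥ B *ᵥ y - 2 * (y ⬝ᵥ x) + x ⬝ᵥ B⁻¹ *ᵥ x := by
      rw [hw, Matrix.mulVec_sub, sub_dotProduct, dotProduct_sub,
        dotProduct_sub, hBw]
      have e1 : (B⁻¹ *ᵥ x) ⬝ᵥ B *ᵥ y = y ⬝ᵥ B *ᵥ (B⁻¹ *ᵥ x) := dot_sym hB.1 _ _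
      have e2 : (B⁻¹ *ᵥ x) ⬝ᵥ x = x ⬝ᵥ B⁻¹ *ᵥ x := dotProduct_comm _ _
      rw [e1, hBw, e2]
      ring
    have h2 : 0 ≤ w ⬝ᵥ B *ᵥ w := by
      have := hB.posSemidef.dotProduct_mulVec_nonneg w
      simpa [star_trivial] using this
    have h1 : 0 < y ⬝ᵥ (A - B) *ᵥ y := by
      have := hD.dotProduct_mulVec_pos hyne
      simpa [star_trivial] using this
    rw [Matrix.sub_mulVec, dotProduct_sub, hAy] at h1
    have hgoal : x ⬝ᵥ (B⁻¹ - A⁻¹) *ᵥ x = x ⬝ᵥ B⁻¹ *ᵥ x - y ⬝ᵥ x := by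
      rw [Matrix.sub_mulVec, dotProduct_sub, ← hy]
      have : x ⬝ᵥ y = y ⬝ᵥ x := dotProduct_comm _ _
      rw [this]
    have : 0 < x ⬝ᵥ (B⁻¹ - A⁻¹) *ᵥ x := by
      rw [hgoal]; linarith
    simpa [star_trivial] using this

lemma chol_qf {m : ℕ} {A R : Matrix (Fin m) (Fin m) ℝ} (h : Rᵀ * R = A) (x : Fin m → ℝ) :
    ∑ k, (R *ᵥ x) k ^ 2 = qf A x := by
  unfold qf
  rw [← h, ← Matrix.mulVec_mulVec]
  calc ∑ k, (R *ᵥ x) k ^ 2 = (R *ᵥ x) ⬝ᵥ (R *ᵥ x) := by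
        simp [dotProduct, sq]
    _ = ((R *ᵥ x) ᵥ* R) ⬝ᵥ x := Matrix.dotProduct_mulVec _ R x
    _ = (Rᵀ *ᵥ (R *ᵥ x)) ⬝ᵥ x := by rw [Matrix.mulVec_transpose]
    _ = x ⬝ᵥ Rᵀ *ᵥ (R *ᵥ x) := dotProduct_comm _ _

lemma euclNorm_chol {m : ℕ} {A R : Matrix (Fin m) (Fin m) ℝ} (h : Rᵀ * R = A)
    (z : Fin m → ℤ) :
    euclNorm (latticeVec R z) = Real.sqrt (qf A (fun k => (z k : ℝ))) := by
  unfold euclNorm latticeVec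
  rw [chol_qf h]

lemma li_transfer {m i : ℕ} {R : Matrix (Fin m) (Fin m) ℝ} (hR : Function.Injective R.mulVec)
    (w : Fin i → (Fin m → ℝ)) :
    LinearIndependent ℝ (fun j => R *ᵥ w j) ↔ LinearIndependent ℝ w := by
  have hker : LinearMap.ker R.mulVecLin = ⊥ := LinearMap.ker_eq_bot.mpr hR
  have := LinearMap.linearIndependent_iff R.mulVecLin hker (v := w)
  exact this

lemma chol_inj {m : ℕ} {A R : Matrix (Fin m) (Fin m) ℝ} (hA : A.PosDef) (h : Rᵀ * R = A) :
    Function.Injective R.mulVec := by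
  apply Matrix.mulVec_injective_iff_isUnit.mpr
  apply (Matrix.isUnit_iff_isUnit_det R).mpr
  apply isUnit_iff_ne_zero.mpr
  intro hdet
  have := hA.det_pos
  rw [← h, Matrix.det_mul, Matrix.det_transpose, hdet] at this
  simp at this

/-- The feasible set of `succMin`. -/
def T {m : ℕ} (S : Matrix (Fin m) (Fin m) ℝ) (i : ℕ) : Set ℝ :=
  {r : ℝ | 0 ≤ r ∧ ∃ v : Fin i → (Fin m → ℤ),
    LinearIndependent ℝ (fun j => latticeVec S (v j)) ∧
    ∀ j, euclNorm (latticeVec S (v j)) ≤ r}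

lemma succMin_eq {m : ℕ} (S : Matrix (Fin m) (Fin m) ℝ) (i : ℕ) :
    succMin S i = sInf (T S i) := rfl

lemma T_nonempty {m i : ℕ} {S : Matrix (Fin m) (Fin m) ℝ}
    (hS : Function.Injective S.mulVec) (him : i ≤ m) : (T S i).Nonempty := by
  classical
  set v : Fin i → (Fin m → ℤ) := fun j k => if (k : ℕ) = (j : ℕ) then 1 else 0 with hv
  have hco : ∀ j, (fun k => ((v j k : ℤ) : ℝ)) = Pi.single (Fin.castLE him j) (1:ℝ) := by
    intro j; funext k
    simp only [hv, Pi.single_apply, Fin.ext_iff, Fin.coe_castLE]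
    split_ifs <;> simp
  have hli : LinearIndependent ℝ (fun j => latticeVec S (v j)) := by
    rw [show (fun j => latticeVec S (v j)) = (fun j => S *ᵥ (fun k => ((v j k : ℤ) : ℝ)))
      from rfl]
    rw [li_transfer hS]
    have hb := (Pi.basisFun ℝ (Fin m)).linearIndependent
    have := hb.comp (Fin.castLE him) (Fin.castLE_injective him)
    convert this using 1
    funext j
    rw [hco j, Function.comp_apply, Pi.basisFun_apply]
  refine ⟨∑ j, euclNorm (latticeVec S (v j)), ?_, v, hli, fun j => ?_⟩
  · exact Finset.sum_nonneg fun j _ => Real.sqrt_nonneg _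
  · exact Finset.single_le_sum (f := fun j => euclNorm (latticeVec S (v j)))
      (fun j _ => Real.sqrt_nonneg _) (Finset.mem_univ j)

lemma T_lower {m i : ℕ} {A' S : Matrix (Fin m) (Fin m) ℝ}
    (hS : Sᵀ * S = A') (hi : 1 ≤ i) {ε : ℝ} (hε : 0 < ε)
    (hlow : ∀ z : Fin m → ℝ, ε * ‖z‖ ^ 2 ≤ qf A' z) :
    ∀ r ∈ T S i, Real.sqrt ε ≤ r := by
  rintro r ⟨hr0, v, hli, hbd⟩
  have hi0 : (0 : ℕ) < i := hi
  set j0 : Fin i := ⟨0, hi0⟩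
  have hne : latticeVec S (v j0) ≠ 0 := hli.ne_zero j0
  set zr : Fin m → ℝ := fun k => ((v j0 k : ℤ) : ℝ) with hzr
  have hzne : zr ≠ 0 := by
    intro h
    apply hne
    unfold latticeVec
    rw [show (fun k => ((v j0 k : ℤ) : ℝ)) = zr from rfl, h, Matrix.mulVec_zero]
  have hk : ∃ k, v j0 k ≠ 0 := by
    by_contra h
    push_neg at h
    apply hzne
    funext k
    simp [hzr, h k]
  obtain ⟨k, hk⟩ := hk
  have h1 : (1:ℝ) ≤ ‖zr‖ := by
    have h2 : (1:ℝ) ≤ ‖zr k‖ := by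
      simp only [hzr, Real.norm_eq_abs, ← Int.cast_abs]
      exact_mod_cast Int.one_le_abs hk
    exact le_trans h2 (norm_le_pi_norm zr k)
  have hq : ε ≤ qf A' zr := by
    have := hlow zr
    have h2 : (1:ℝ) ≤ ‖zr‖ ^ 2 := by nlinarith
    nlinarith
  have : Real.sqrt ε ≤ euclNorm (latticeVec S (v j0)) := by
    rw [euclNorm_chol hS]
    exact Real.sqrt_le_sqrt hq
  exact le_trans this (hbd j0)

lemma succMin_lt_succMin {m : ℕ} {A A' R S : Matrix (Fin m) (Fin m) ℝ}
    (hA' : A'.PosDef) (hD : (A - A').PosDef)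
    (hR : Rᵀ * R = A) (hS : Sᵀ * S = A') :
    ∀ i : ℕ, 1 ≤ i → i ≤ m → succMin S i < succMin R i := by
  intro i hi1 him
  have hm : 0 < m := lt_of_lt_of_le hi1 him
  have hA : A.PosDef := by
    have h := hA'.add_posSemidef hD.posSemidef
    rwa [add_sub_cancel] at h
  have hRinj : Function.Injective R.mulVec := chol_inj hA hR
  have hSinj : Function.Injective S.mulVec := chol_inj hA' hS
  obtain ⟨ε, hε, hlow⟩ := quad_lower hm hA'
  obtain ⟨c, hc1, hratio⟩ := exists_ratio hm hA' hD
  have hc0 : (0:ℝ) < c := lt_trans one_pos hc1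
  have hTRne : (T R i).Nonempty := T_nonempty hRinj him
  have hTSne : (T S i).Nonempty := T_nonempty hSinj him
  have hTSbdd : BddBelow (T S i) := ⟨0, fun x hx => hx.1⟩
  have hstep : ∀ r ∈ T R i, r / c ∈ T S i := by
    rintro r ⟨hr0, v, hli, hbd⟩
    refine ⟨div_nonneg hr0 hc0.le, v, ?_, fun j => ?_⟩
    · rw [show (fun j => latticeVec S (v j)) = (fun j => S *ᵥ (fun k => ((v j k : ℤ) : ℝ)))
        from rfl, li_transfer hSinj]
      have := hli
      rw [show (fun j => latticeVec R (v j)) = (fun j => R *ᵥ (fun k => ((v j k : ℤ) : ℝ)))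
        from rfl, li_transfer hRinj] at this
      exact this
    · set zr : Fin m → ℝ := fun k => ((v j k : ℤ) : ℝ)
      have hbj := hbd j
      rw [euclNorm_chol hR] at hbj
      have hqA_nonneg : 0 ≤ qf A zr := by
        rw [← chol_qf hR]
        exact Finset.sum_nonneg fun k _ => sq_nonneg _
      have hqA_le : qf A zr ≤ r ^ 2 := by
        calc qf A zr = Real.sqrt (qf A zr) ^ 2 := (Real.sq_sqrt hqA_nonneg).symm
          _ ≤ r ^ 2 := pow_le_pow_left₀ (Real.sqrt_nonneg _) hbj 2
      have hqA' : qf A' zr ≤ (r / c) ^ 2 := by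
        have := hratio zr
        rw [div_pow]
        rw [le_div_iff₀ (by positivity)]
        nlinarith
      rw [euclNorm_chol hS]
      calc Real.sqrt (qf A' zr) ≤ Real.sqrt ((r / c) ^ 2) := Real.sqrt_le_sqrt hqA'
        _ = r / c := Real.sqrt_sq (div_nonneg hr0 hc0.le)
  have hlb : Real.sqrt ε ≤ sInf (T S i) :=
    le_csInf hTSne (T_lower hS hi1 hε hlow)
  have hSpos : 0 < sInf (T S i) := lt_of_lt_of_le (Real.sqrt_pos.mpr hε) hlb
  have hmain : c * sInf (T S i) ≤ sInf (T R i) := by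
    apply le_csInf hTRne
    intro r hr
    have h1 : sInf (T S i) ≤ r / c := csInf_le hTSbdd (hstep r hr)
    rw [mul_comm, ← le_div_iff₀ hc0]
    exact h1
  rw [succMin_eq, succMin_eq]
  calc sInf (T S i) < c * sInf (T S i) := by nlinarith
    _ ≤ sInf (T R i) := hmain

end Aux7

open Aux7 in
theorem statement7 {n m : ℕ} (G1 G2 : Matrix (Fin n) (Fin n) ℝ)
    (hG1 : G1.PosDef) (hG2 : G2.PosDef) (hdiff : (G1 - G2).PosDef)
    (G : Matrix (Fin m) (Fin m) ℝ) (hG : G.PosSemidef)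
    (B : Matrix (Fin n) (Fin m) ℝ) (hB : B.rank = m)
    (R1 R2 R3 R4 Rh1 Rh2 Rh3 Rh4 : Matrix (Fin m) (Fin m) ℝ)
    (hR1 : IsCholesky (G + Bᵀ * G1 * B) R1)
    (hR2 : IsCholesky (G + Bᵀ * G2 * B) R2)
    (hR3 : IsCholesky (G + Bᵀ * G1⁻¹ * B) R3)
    (hR4 : IsCholesky (G + Bᵀ * G2⁻¹ * B) R4)
    (hRh1 : IsCholesky (G + Bᵀ * G1 * B)⁻¹ Rh1)
    (hRh2 : IsCholesky (G + Bᵀ * G2 * B)⁻¹ Rh2)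
    (hRh3 : IsCholesky (G + Bᵀ * G1⁻¹ * B)⁻¹ Rh3)
    (hRh4 : IsCholesky (G + Bᵀ * G2⁻¹ * B)⁻¹ Rh4) :
    ∀ i : ℕ, 1 ≤ i → i ≤ m →
      succMin R2 i < succMin R1 i ∧ succMin Rh1 i < succMin Rh2 i ∧
      succMin R3 i < succMin R4 i ∧ succMin Rh4 i < succMin Rh3 i := by
  intro i hi1 him
  have hBinj : Function.Injective B.mulVec := rank_inj hB
  -- positive definiteness of the four Gram matrices
  have hA1 : (G + Bᵀ * G1 * B).PosDef := Matrix.PosDef.posSemidef_add hG (conj_posDef hG1 hBinj)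
  have hA2 : (G + Bᵀ * G2 * B).PosDef := Matrix.PosDef.posSemidef_add hG (conj_posDef hG2 hBinj)
  have hA3 : (G + Bᵀ * G1⁻¹ * B).PosDef := Matrix.PosDef.posSemidef_add hG (conj_posDef hG1.inv hBinj)
  have hA4 : (G + Bᵀ * G2⁻¹ * B).PosDef := Matrix.PosDef.posSemidef_add hG (conj_posDef hG2.inv hBinj)
  -- differences
  have hd12 : ((G + Bᵀ * G1 * B) - (G + Bᵀ * G2 * B)).PosDef := by
    have he : (G + Bᵀ * G1 * B) - (G + Bᵀ * G2 * B) = Bᵀ * (G1 - G2) * B := by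
      rw [Matrix.mul_sub, Matrix.sub_mul]
      abel
    rw [he]
    exact conj_posDef hdiff hBinj
  have hinv12 : (G2⁻¹ - G1⁻¹).PosDef := inv_sub_inv_posDef hG1 hG2 hdiff
  have hd43 : ((G + Bᵀ * G2⁻¹ * B) - (G + Bᵀ * G1⁻¹ * B)).PosDef := by
    have he : (G + Bᵀ * G2⁻¹ * B) - (G + Bᵀ * G1⁻¹ * B) = Bᵀ * (G2⁻¹ - G1⁻¹) * B := by
      rw [Matrix.mul_sub, Matrix.sub_mul]
      abel
    rw [he]
    exact conj_posDef hinv12 hBinj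
  refine ⟨?_, ?_, ?_, ?_⟩
  · exact succMin_lt_succMin hA2 hd12 hR1.2.2 hR2.2.2 i hi1 him
  · have hdinv : ((G + Bᵀ * G2 * B)⁻¹ - (G + Bᵀ * G1 * B)⁻¹).PosDef :=
      inv_sub_inv_posDef hA1 hA2 hd12
    exact succMin_lt_succMin hA1.inv hdinv hRh2.2.2 hRh1.2.2 i hi1 him
  · exact succMin_lt_succMin hA3 hd43 hR4.2.2 hR3.2.2 i hi1 him
  · have hdinv : ((G + Bᵀ * G1⁻¹ * B)⁻¹ - (G + Bᵀ * G2⁻¹ * B)⁻¹).PosDef :=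
      inv_sub_inv_posDef hA4 hA3 hd43
    exact succMin_lt_succMin hA4.inv hdinv hRh3.2.2 hRh4.2.2 i hi1 him
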